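/- Let t : Fin n → A × B with n ≥ 1 model a bag relation. Then pdep(t) ≥ pdepY, i.e. Σ_a p₁(a) · Σ_b p(b∣a)² ≥ Σ_b p₂(b)². (Probabilistic dependency dominates probabilistic self-dependency; equivalently, the Goodman–Kruskal τ is nonnegative.) -/
import Mathlib


namespace AFD

open Finset

variable {A B : Type*}

/-- Number of indices with X-value `a`. -/
def c1 {n : ℕ} [DecidableEq A] (t : Fin n → A × B) (a : A) : ℕ :=
  (Finset.univ.filter fun i => (t i).1 = a).card

/-- Number of indices with Y-value `b`. -/
def c2 {n : ℕ} [DecidableEq B] (t : Fin n → A × B) (b : B) : ℕ :=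
  (Finset.univ.filter fun i => (t i).2 = b).card

/-- Number of indices with tuple value `(a, b)`. -/
def cnt {n : ℕ} [DecidableEq A] [DecidableEq B] (t : Fin n → A × B) (a : A) (b : B) : ℕ :=
  (Finset.univ.filter fun i => t i = (a, b)).card

/-- Marginal probability of X-value `a`. -/
noncomputable def p1 {n : ℕ} [DecidableEq A] (t : Fin n → A × B) (a : A) : ℝ :=
  (c1 t a : ℝ) / n

/-- Marginal probability of Y-value `b`. -/
noncomputable def p2 {n : ℕ} [DecidableEq B] (t : Fin n → A × B) (b : B) : ℝ :=
  (c2 t b : ℝ) / n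

/-- Joint probability of `(a, b)`. -/
noncomputable def pJ {n : ℕ} [DecidableEq A] [DecidableEq B] (t : Fin n → A × B)
    (a : A) (b : B) : ℝ :=
  (cnt t a b : ℝ) / n

/-- Conditional probability of Y-value `b` given X-value `a` (with the `0/0 = 0` convention,
which is automatic for real division in Lean). -/
noncomputable def pC {n : ℕ} [DecidableEq A] [DecidableEq B] (t : Fin n → A × B)
    (a : A) (b : B) : ℝ :=
  pJ t a b / p1 t a

/-- The set of distinct X-values. -/
def domX {n : ℕ} [DecidableEq A] (t : Fin n → A × B) : Finset A :=
  Finset.univ.image fun i => (t i).1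

/-- The set of distinct Y-values. -/
def domY {n : ℕ} [DecidableEq B] (t : Fin n → A × B) : Finset B :=
  Finset.univ.image fun i => (t i).2

/-- The set of distinct tuples. -/
def domXY {n : ℕ} [DecidableEq A] [DecidableEq B] (t : Fin n → A × B) : Finset (A × B) :=
  Finset.univ.image t

/-- The probabilistic dependency `pdep(X → Y)`. -/
noncomputable def pdep {n : ℕ} [DecidableEq A] [DecidableEq B] (t : Fin n → A × B) : ℝ :=
  ∑ a ∈ domX t, p1 t a * ∑ b ∈ domY t, (pC t a b) ^ 2

/-- The probabilistic self-dependency `pdep(Y)`. -/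
noncomputable def pdepY {n : ℕ} [DecidableEq B] (t : Fin n → A × B) : ℝ :=
  ∑ b ∈ domY t, (p2 t b) ^ 2

/-- The (X;Y)-permutation of `t` induced by the permutation `σ`. -/
def permRel {n : ℕ} (t : Fin n → A × B) (σ : Equiv.Perm (Fin n)) : Fin n → A × B :=
  fun i => ((t i).1, (t (σ i)).2)

/-- `t` satisfies the functional dependency X → Y. -/
def satFD {n : ℕ} (t : Fin n → A × B) : Prop :=
  ∀ i j, (t i).1 = (t j).1 → (t i).2 = (t j).2

/-- Probabilistic dependency dominates probabilistic self-dependency: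
`pdep(t) ≥ pdepY`; equivalently, the Goodman–Kruskal τ is nonnegative. -/

theorem aux_sum_c1 {n : ℕ} [DecidableEq A] (t : Fin n → A × B) :
    ∑ a ∈ domX t, c1 t a = n := by
  have := Finset.card_eq_sum_card_image (fun i => (t i).1) (Finset.univ : Finset (Fin n))
  simpa [domX, c1] using this.symm

theorem aux_sum_cnt {n : ℕ} [DecidableEq A] [DecidableEq B] (t : Fin n → A × B) (b : B) :
    ∑ a ∈ domX t, cnt t a b = c2 t b := by
  have h := Finset.card_eq_sum_card_fiberwise
    (f := fun i => (t i).1) (s := Finset.univ.filter fun i => (t i).2 = b) (t := domX t)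
    (fun x _ => Finset.mem_image.2 ⟨x, Finset.mem_univ x, rfl⟩)
  rw [c2, h]
  refine Finset.sum_congr rfl fun a _ => ?_
  rw [cnt, Finset.filter_filter]
  congr 1
  apply Finset.filter_congr
  intro i _
  simp [Prod.ext_iff, and_comm]

theorem aux_p1_pos {n : ℕ} [DecidableEq A] (t : Fin n → A × B) {a : A}
    (ha : a ∈ domX t) : 0 < p1 t a := by
  obtain ⟨i, _, rfl⟩ := Finset.mem_image.1 ha
  have hc : 0 < c1 t (t i).1 :=
    Finset.card_pos.2 ⟨i, Finset.mem_filter.2 ⟨Finset.mem_univ i, rfl⟩⟩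
  have hn : 0 < n := i.pos
  exact div_pos (by exact_mod_cast hc) (by exact_mod_cast hn)

theorem aux_sum_p1 {n : ℕ} [DecidableEq A] (hn : 1 ≤ n) (t : Fin n → A × B) :
    ∑ a ∈ domX t, p1 t a = 1 := by
  have h := aux_sum_c1 t
  have hn' : (n : ℝ) ≠ 0 := by exact_mod_cast Nat.one_le_iff_ne_zero.1 hn
  simp only [p1, ← Finset.sum_div]
  rw [div_eq_one_iff_eq hn']
  exact_mod_cast h

theorem aux_sum_pJ {n : ℕ} [DecidableEq A] [DecidableEq B] (t : Fin n → A × B) (b : B) :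
    ∑ a ∈ domX t, pJ t a b = p2 t b := by
  have h := aux_sum_cnt t b
  simp only [pJ, p2, ← Finset.sum_div]
  congr 1
  exact_mod_cast h

theorem pdep_ge_pdepY {A B : Type*} [DecidableEq A] [DecidableEq B]
    {n : ℕ} (hn : 1 ≤ n) (t : Fin n → A × B) :
    pdepY t ≤ pdep t := by
  have key : ∀ b ∈ domY t, (p2 t b) ^ 2 ≤ ∑ a ∈ domX t, p1 t a * (pC t a b) ^ 2 := by
    intro b _
    have hcs := Finset.sum_mul_sq_le_sq_mul_sq (domX t)
      (fun a => Real.sqrt (p1 t a)) (fun a => Real.sqrt (p1 t a) * pC t a b)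
    have h1 : ∀ a ∈ domX t, Real.sqrt (p1 t a) * (Real.sqrt (p1 t a) * pC t a b)
        = pJ t a b := by
      intro a ha
      have hp := aux_p1_pos t ha
      rw [← mul_assoc, Real.mul_self_sqrt hp.le, pC, mul_div_cancel₀ _ hp.ne']
    have h2 : ∀ a ∈ domX t, Real.sqrt (p1 t a) ^ 2 = p1 t a := fun a ha =>
      Real.sq_sqrt (aux_p1_pos t ha).le
    have h3 : ∀ a ∈ domX t, (Real.sqrt (p1 t a) * pC t a b) ^ 2
        = p1 t a * (pC t a b) ^ 2 := by
      intro a ha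
      rw [mul_pow, Real.sq_sqrt (aux_p1_pos t ha).le]
    calc (p2 t b) ^ 2 = (∑ a ∈ domX t, Real.sqrt (p1 t a) * (Real.sqrt (p1 t a) * pC t a b)) ^ 2 := by
          rw [Finset.sum_congr rfl h1, aux_sum_pJ]
      _ ≤ (∑ a ∈ domX t, Real.sqrt (p1 t a) ^ 2) * ∑ a ∈ domX t, (Real.sqrt (p1 t a) * pC t a b) ^ 2 := hcs
      _ = ∑ a ∈ domX t, p1 t a * (pC t a b) ^ 2 := by
          rw [Finset.sum_congr rfl h2, Finset.sum_congr rfl h3, aux_sum_p1 hn, one_mul]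
  calc pdepY t ≤ ∑ b ∈ domY t, ∑ a ∈ domX t, p1 t a * (pC t a b) ^ 2 :=
        Finset.sum_le_sum key
    _ = pdep t := by
        rw [Finset.sum_comm, pdep]
        exact Finset.sum_congr rfl fun a _ => (Finset.mul_sum _ _ _).symm

end AFD
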